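/- Fix t > 0 and let v = v_t(u) be defined implicitly by u² = (1/v)(1+v)(t−v−v²) for v > 0. Define ψ_t(u) = u + u·v_t(u)/(1+v_t(u)). Then ψ_t is differentiable with ψ_t'(u) = (t + 4v²(1+v)²)/((1+v)(t + 2v²(1+v))), where v = v_t(u). -/

import Mathlib

open Real Filter Topology

theorem cauchy_psi_deriv (t : ℝ) (ht : 0 < t) (v ψ : ℝ → ℝ)
    (hpos : ∀ u, 0 < v u)
    (himp : ∀ u : ℝ, u ^ 2 = (1 / v u) * (1 + v u) * (t - v u - (v u) ^ 2))
    (hψ : ∀ u : ℝ, ψ u = u + u * v u / (1 + v u)) :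
    ∀ u : ℝ, HasDerivAt ψ
      ((t + 4 * (v u) ^ 2 * (1 + v u) ^ 2) / ((1 + v u) * (t + 2 * (v u) ^ 2 * (1 + v u)))) u := by
  intro u₀
  set x₀ := v u₀ with hx₀def
  have hx₀ : 0 < x₀ := hpos u₀
  -- key algebraic slope identity
  have key : ∀ u : ℝ, (v u - x₀) * (t / (v u * x₀) + 2 + v u + x₀) = -(u ^ 2 - u₀ ^ 2) := by
    intro u
    have ha := hpos u
    have h1 := himp u
    have h2 := himp u₀
    rw [hx₀def] at *
    field_simp at h1 h2 ⊢
    nlinarith [h1, h2, sq_nonneg (v u - v u₀)]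
  have hK : ∀ u : ℝ, 2 ≤ t / (v u * x₀) + 2 + v u + x₀ := by
    intro u
    have ha := hpos u
    have : 0 < t / (v u * x₀) := by positivity
    linarith
  -- continuity of v at u₀
  have hcont : Tendsto v (𝓝 u₀) (𝓝 x₀) := by
    rw [tendsto_iff_dist_tendsto_zero]
    have hb : ∀ u : ℝ, dist (v u) x₀ ≤ |u ^ 2 - u₀ ^ 2| / 2 := by
      intro u
      have hK2 := hK u
      have h := key u
      have : |v u - x₀| * 2 ≤ |v u - x₀| * (t / (v u * x₀) + 2 + v u + x₀) := by
        apply mul_le_mul_of_nonneg_left hK2 (abs_nonneg _)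
      have h2 : |v u - x₀| * (t / (v u * x₀) + 2 + v u + x₀) = |u ^ 2 - u₀ ^ 2| := by
        rw [← abs_of_nonneg (by linarith : (0:ℝ) ≤ t / (v u * x₀) + 2 + v u + x₀),
          ← abs_mul, h, abs_neg]
      rw [Real.dist_eq]
      linarith [this, h2.le, h2.ge]
    have hg : Tendsto (fun u : ℝ => |u ^ 2 - u₀ ^ 2| / 2) (𝓝 u₀) (𝓝 0) := by
      have : ContinuousAt (fun u : ℝ => |u ^ 2 - u₀ ^ 2| / 2) u₀ := by fun_prop
      simpa using this.tendsto
    exact squeeze_zero (fun u => dist_nonneg) hb hg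
  -- derivative of v
  set K₀ : ℝ := t / (x₀ * x₀) + 2 + x₀ + x₀ with hK₀def
  have hK₀pos : 0 < K₀ := by
    have : 0 < t / (x₀ * x₀) := by positivity
    rw [hK₀def]; linarith
  have hv : HasDerivAt v (-(u₀ + u₀) / K₀) u₀ := by
    rw [hasDerivAt_iff_tendsto_slope]
    have hF : Tendsto (fun u : ℝ => -(u + u₀) / (t / (v u * x₀) + 2 + v u + x₀))
        (𝓝 u₀) (𝓝 (-(u₀ + u₀) / K₀)) := by
      apply Tendsto.div
      · exact ((tendsto_id.add_const u₀).neg)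
      · rw [hK₀def]
        exact ((tendsto_const_nhds.div (hcont.mul tendsto_const_nhds)
          (by positivity)).add_const 2 |>.add hcont).add_const x₀
      · exact hK₀pos.ne'
    apply Tendsto.congr' _ (hF.mono_left nhdsWithin_le_nhds)
    filter_upwards [self_mem_nhdsWithin] with u hu
    have hune : u - u₀ ≠ 0 := sub_ne_zero.mpr hu
    have hKu : t / (v u * x₀) + 2 + v u + x₀ ≠ 0 := by linarith [hK u]
    have h := key u
    rw [slope_def_field, div_eq_div_iff hKu hune, ← hx₀def]
    linear_combination -h
  -- derivative of ψ
  have h1x : (0:ℝ) < 1 + x₀ := by linarith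
  have hg : HasDerivAt (fun u => v u / (1 + v u))
      (((-(u₀ + u₀) / K₀) * (1 + x₀) - x₀ * (-(u₀ + u₀) / K₀)) / (1 + x₀) ^ 2) u₀ :=
    hv.div (hv.const_add 1) h1x.ne'
  have hmul : HasDerivAt (fun u => u * (v u / (1 + v u)))
      (1 * (x₀ / (1 + x₀)) + u₀ * (((-(u₀ + u₀) / K₀) * (1 + x₀) - x₀ * (-(u₀ + u₀) / K₀)) / (1 + x₀) ^ 2)) u₀ :=
    (hasDerivAt_id u₀).mul hg
  have hψ' : HasDerivAt ψ
      (1 + (1 * (x₀ / (1 + x₀)) + u₀ * (((-(u₀ + u₀) / K₀) * (1 + x₀) - x₀ * (-(u₀ + u₀) / K₀)) / (1 + x₀) ^ 2))) u₀ := by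
    have : ψ = fun u => u + u * (v u / (1 + v u)) := by
      funext u
      rw [hψ u, mul_div_assoc]
    rw [this]
    exact (hasDerivAt_id u₀).add hmul
  convert hψ' using 1
  have h2 := himp u₀
  rw [← hx₀def] at h2
  have hden : 0 < t + 2 * x₀ ^ 2 * (1 + x₀) := by positivity
  rw [hK₀def]
  field_simp
  ring_nf
  rw [h2]
  field_simp
  ring
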